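/- Let A be a Noetherian ring. Suppose that every right primitive ideal P of A has the right Artin–Rees property (i.e. for every essential extension N ⊆ M of finitely generated right A-modules with NP = 0 there exists n ≥ 1 with MPⁿ = 0) and that A/P is a right Artinian ring for every right primitive ideal P. Then every finitely generated essential extension of a simple right A-module is Artinian. -/

import Mathlib

universe u

/-- A submodule is essential if it intersects every nonzero submodule nontrivially. -/
def IsEssSub {R M : Type*} [Ring R] [AddCommGroup M] [Module R M] (N : Submodule R M) : Prop :=
  ∀ L : Submodule R M, L ≠ ⊥ → N ⊓ L ≠ ⊥

/-- Property `(⋄)`: every finitely generated essential extension of a simple right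
`A`-module is Artinian.  Right `A`-modules are (left) `Aᵐᵒᵖ`-modules. -/
def HasDiamond (A : Type*) [Ring A] : Prop :=
  ∀ (M : Type u) (_ : AddCommGroup M) (_ : Module Aᵐᵒᵖ M) (_ : Module.Finite Aᵐᵒᵖ M)
    (N : Submodule Aᵐᵒᵖ M), IsSimpleModule Aᵐᵒᵖ N → IsEssSub N → IsArtinian Aᵐᵒᵖ M

/-- A right primitive ideal of `A` is the annihilator of a simple right `A`-module.
Right ideals of `A` are left ideals of `Aᵐᵒᵖ`. -/
def IsRightPrimitive (A : Type u) [Ring A] (P : Ideal Aᵐᵒᵖ) : Prop :=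
  ∃ (M : Type u) (_ : AddCommGroup M) (_ : Module Aᵐᵒᵖ M),
    IsSimpleModule Aᵐᵒᵖ M ∧ P = Module.annihilator Aᵐᵒᵖ M

/-- `P` has the right Artin–Rees property: for every essential extension `N ⊆ M` of
finitely generated right `A`-modules with `N·P = 0` there is `n ≥ 1` with `M·Pⁿ = 0`. -/
def HasRightARProperty (A : Type u) [Ring A] (P : Ideal Aᵐᵒᵖ) : Prop :=
  ∀ (M : Type u) (_ : AddCommGroup M) (_ : Module Aᵐᵒᵖ M) (_ : Module.Finite Aᵐᵒᵖ M)
    (N : Submodule Aᵐᵒᵖ M) (_ : Module.Finite Aᵐᵒᵖ N),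
    IsEssSub N → P • N = ⊥ → ∃ n : ℕ, 1 ≤ n ∧ P ^ n • (⊤ : Submodule Aᵐᵒᵖ M) = ⊥

universe v

/-- Right noetherianness of `A` makes `Aᵐᵒᵖ` a left noetherian ring. -/
lemma opNoetherianRing (A : Type u) [Ring A] (hright : IsNoetherian Aᵐᵒᵖ A) :
    IsNoetherianRing Aᵐᵒᵖ := by
  let e : A ≃ₗ[Aᵐᵒᵖ] Aᵐᵒᵖ :=
    { MulOpposite.opAddEquiv with
      map_smul' := fun r x => by
        show MulOpposite.op (r • x) = r • MulOpposite.op x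
        rw [MulOpposite.smul_eq_mul_unop]
        simp [MulOpposite.op_mul] }
  exact isNoetherian_of_linearEquiv e

/-- A finitely generated module annihilated by `P` is Artinian whenever the right
module `Aᵐᵒᵖ ⧸ P` is Artinian. -/
lemma isArtinian_of_annihilated (A : Type u) [Ring A] (P : Ideal Aᵐᵒᵖ)
    (hP : IsArtinian Aᵐᵒᵖ (Aᵐᵒᵖ ⧸ P)) (M : Type v) [AddCommGroup M] [Module Aᵐᵒᵖ M]
    [Module.Finite Aᵐᵒᵖ M] (hann : P • (⊤ : Submodule Aᵐᵒᵖ M) = ⊥) :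
    IsArtinian Aᵐᵒᵖ M := by
  classical
  obtain ⟨s, hs⟩ := Module.Finite.fg_top (R := Aᵐᵒᵖ) (M := M)
  have hker : ∀ x : M, P ≤ LinearMap.ker (LinearMap.toSpanSingleton Aᵐᵒᵖ M x) := by
    intro x p hp
    have h1 : p • x ∈ P • (⊤ : Submodule Aᵐᵒᵖ M) :=
      Submodule.smul_mem_smul hp Submodule.mem_top
    rw [hann] at h1
    simpa [LinearMap.mem_ker] using h1
  let ψ : M → (Aᵐᵒᵖ ⧸ P) →ₗ[Aᵐᵒᵖ] M := fun x =>
    P.liftQ (LinearMap.toSpanSingleton Aᵐᵒᵖ M x) (hker x)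
  let f : ((x : s) → Aᵐᵒᵖ ⧸ P) →ₗ[Aᵐᵒᵖ] M :=
    LinearMap.lsum Aᵐᵒᵖ (fun _ : s => Aᵐᵒᵖ ⧸ P) ℕ (fun i => ψ (i : M))
  apply isArtinian_of_surjective _ f
  rw [← LinearMap.range_eq_top, eq_top_iff, ← hs]
  rw [Submodule.span_le]
  intro x hx
  refine ⟨Pi.single (⟨x, hx⟩ : s) (Submodule.Quotient.mk 1), ?_⟩
  have : ∀ i : s, ψ (i : M)
      (Pi.single (M := fun _ : s => Aᵐᵒᵖ ⧸ P) (⟨x, hx⟩ : s) (Submodule.Quotient.mk (1 : Aᵐᵒᵖ)) i)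
      = if i = ⟨x, hx⟩ then x else 0 := by
    intro i
    rw [Pi.single_apply]
    split
    · next h => subst h; simp [ψ, Submodule.liftQ_apply]
    · simp
  simp only [f, LinearMap.lsum_apply, LinearMap.coe_sum, Finset.sum_apply,
    LinearMap.coe_comp, Function.comp_apply, LinearMap.coe_proj]
  rw [Finset.sum_congr rfl (fun i _ => this i)]
  simp

/-- Essentiality is preserved by linear equivalences. -/
lemma IsEssSub.map {R M M' : Type*} [Ring R] [AddCommGroup M] [Module R M]
    [AddCommGroup M'] [Module R M'] (e : M ≃ₗ[R] M') {N : Submodule R M}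
    (h : IsEssSub N) : IsEssSub (N.map (e : M →ₗ[R] M')) := by
  intro L hL
  let o : Submodule R M ≃o Submodule R M' := Submodule.orderIsoMapComap e
  have h1 : o.symm L ≠ ⊥ := by
    intro hc
    apply hL
    have := congrArg o hc
    rwa [o.apply_symm_apply, o.map_bot] at this
  have h2 := h (o.symm L) h1
  have h3 : o (N ⊓ o.symm L) ≠ ⊥ := by
    intro hc
    apply h2
    have := congrArg o.symm hc
    rwa [o.symm_apply_apply, o.symm.map_bot] at this
  rwa [OrderIso.map_inf, o.apply_symm_apply] at h3

/-- The key induction: a finitely generated module killed by a power of `P` is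
Artinian, provided the right module `Aᵐᵒᵖ ⧸ P` is Artinian and `Aᵐᵒᵖ` is left
noetherian. -/
lemma artinian_of_pow_ann (A : Type u) [Ring A] (P : Ideal Aᵐᵒᵖ)
    (hNR : IsNoetherianRing Aᵐᵒᵖ) (hartP : IsArtinian Aᵐᵒᵖ (Aᵐᵒᵖ ⧸ P)) :
    ∀ (n : ℕ) (M : Type v) (_ : AddCommGroup M) (_ : Module Aᵐᵒᵖ M)
      (_ : Module.Finite Aᵐᵒᵖ M),
      P ^ n • (⊤ : Submodule Aᵐᵒᵖ M) = ⊥ → IsArtinian Aᵐᵒᵖ M := by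
  intro n
  induction n with
  | zero =>
    intro M _ _ _ hbot
    rw [Submodule.pow_zero, Ideal.one_eq_top, Submodule.top_smul] at hbot
    haveI : Subsingleton M := ⟨fun a b => by
      have ha : a ∈ (⊥ : Submodule Aᵐᵒᵖ M) := hbot ▸ Submodule.mem_top
      have hb : b ∈ (⊥ : Submodule Aᵐᵒᵖ M) := hbot ▸ Submodule.mem_top
      rw [Submodule.mem_bot] at ha hb; rw [ha, hb]⟩
    infer_instance
  | succ n ih =>
    intro M _ _ _ hbot
    haveI : IsNoetherian Aᵐᵒᵖ M := inferInstance
    rw [Submodule.pow_succ, ← Ideal.smul_eq_mul, Submodule.smul_assoc] at hbot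
    set K := P • (⊤ : Submodule Aᵐᵒᵖ M) with hK
    haveI : Module.Finite Aᵐᵒᵖ ↥K := Module.Finite.iff_fg.mpr (IsNoetherian.noetherian K)
    have hKbot : P ^ n • (⊤ : Submodule Aᵐᵒᵖ ↥K) = ⊥ := by
      apply Submodule.map_injective_of_injective K.injective_subtype
      rw [Submodule.map_smul'', Submodule.map_top, Submodule.range_subtype, Submodule.map_bot]
      exact hbot
    haveI hKart : IsArtinian Aᵐᵒᵖ ↥K := ih ↥K _ _ inferInstance hKbot
    have hQbot : P • (⊤ : Submodule Aᵐᵒᵖ (M ⧸ K)) = ⊥ := by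
      have h1 : Submodule.map K.mkQ (P • (⊤ : Submodule Aᵐᵒᵖ M))
          = P • (⊤ : Submodule Aᵐᵒᵖ (M ⧸ K)) := by
        rw [Submodule.map_smul'', Submodule.map_top, Submodule.range_mkQ]
      rw [← h1, ← hK, eq_bot_iff]
      rintro x ⟨y, hy, rfl⟩
      simp only [Submodule.mkQ_apply, Submodule.mem_bot, Submodule.Quotient.mk_eq_zero]
      exact hy
    haveI : Module.Finite Aᵐᵒᵖ (M ⧸ K) := Module.Finite.quotient _ _
    haveI hQart : IsArtinian Aᵐᵒᵖ (M ⧸ K) :=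
      isArtinian_of_annihilated A P hartP (M ⧸ K) hQbot
    exact (isArtinian_iff_submodule_quotient K).mpr ⟨hKart, hQart⟩

/-- Let `A` be a Noetherian ring such that every right primitive ideal `P` has the
right Artin–Rees property and every right primitive factor `A/P` is right Artinian.
Then every finitely generated essential extension of a simple right `A`-module is
Artinian. -/
theorem hasDiamond_of_ar_primitive (A : Type u) [Ring A]
    (hleft : IsNoetherianRing A) (hright : IsNoetherian Aᵐᵒᵖ A)
    (hAR : ∀ P : Ideal Aᵐᵒᵖ, IsRightPrimitive A P → HasRightARProperty A P)
    (hart : ∀ P : Ideal Aᵐᵒᵖ, IsRightPrimitive A P → IsArtinian Aᵐᵒᵖ (Aᵐᵒᵖ ⧸ P)) :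
    HasDiamond A := by
  haveI hNR : IsNoetherianRing Aᵐᵒᵖ := opNoetherianRing A hright
  intro M iAG iMod iFin N hsimple hess
  -- replace `M` by an isomorphic module in `Type u`
  obtain ⟨k, f, hf⟩ := Module.Finite.exists_fin' Aᵐᵒᵖ M
  let M' : Type u := (Fin k → Aᵐᵒᵖ) ⧸ LinearMap.ker f
  let e : M' ≃ₗ[Aᵐᵒᵖ] M := f.quotKerEquivOfSurjective hf
  suffices h : IsArtinian Aᵐᵒᵖ M' from isArtinian_of_linearEquiv e
  haveI : Module.Finite Aᵐᵒᵖ M' := Module.Finite.quotient _ _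
  haveI : IsNoetherian Aᵐᵒᵖ M' := inferInstance
  set N' : Submodule Aᵐᵒᵖ M' := N.map (e.symm : M →ₗ[Aᵐᵒᵖ] M') with hN'
  have eN : ↥N ≃ₗ[Aᵐᵒᵖ] ↥N' := e.symm.submoduleMap N
  haveI hsimple' : IsSimpleModule Aᵐᵒᵖ ↥N' := by
    haveI := hsimple
    exact IsSimpleModule.congr eN.symm
  have hess' : IsEssSub N' := IsEssSub.map e.symm hess
  haveI : Module.Finite Aᵐᵒᵖ ↥N' := Module.Finite.iff_fg.mpr (IsNoetherian.noetherian N')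
  set P : Ideal Aᵐᵒᵖ := Module.annihilator Aᵐᵒᵖ ↥N' with hP
  have hprim : IsRightPrimitive A P := ⟨↥N', inferInstance, inferInstance, hsimple', rfl⟩
  have hPN : P • N' = ⊥ := by
    rw [eq_bot_iff]
    refine Submodule.smul_le.2 fun p hp x hx => ?_
    have h0 := Module.mem_annihilator.mp hp ⟨x, hx⟩
    have hx0 : p • x = 0 := congrArg Subtype.val h0
    simp [hx0]
  obtain ⟨n, -, hbot⟩ :=
    hAR P hprim M' inferInstance inferInstance inferInstance N' inferInstance hess' hPN
  exact artinian_of_pow_ann A P hNR (hart P hprim) n M' inferInstance inferInstance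
    inferInstance hbot
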